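/- arXiv:1210.6722 — 5 statements merged into one kernel-verified Lean document; each statement's English description precedes it below -/
import Mathlib

section
/- Let G, H, U be bases of F_q^n with g_i · h_j = δ_{i,n-j+1}. Then the following two statements are equivalent: (1) ρ̄_G(g_i ∗ u_j) = k and (i,j) is well-behaving with respect to (G,U); (2) ρ̄_H(h_{n-k+1} ∗ u_j) = n-i+1 and (n-k+1, j) is well-behaving with respect to (H,U). -/
def Lspan (F : Type*) [Field F] {n : ℕ} (b : Fin n → Fin n → F) (l : ℕ) :
    Submodule F (Fin n → F) :=
  Submodule.span F (b '' {i | (i : ℕ) < l})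

noncomputable def rho (F : Type*) [Field F] {n : ℕ} (b : Fin n → Fin n → F)
    (v : Fin n → F) : ℕ :=
  sInf {l | v ∈ Lspan F b l}

def IsBasisFam (F : Type*) [Field F] {n : ℕ} (b : Fin n → Fin n → F) : Prop :=
  LinearIndependent F b ∧ Submodule.span F (Set.range b) = ⊤

def WB (F : Type*) [Field F] {n : ℕ} (b u : Fin n → Fin n → F) (i j : Fin n) : Prop :=
  ∀ i' j' : Fin n, i' ≤ i → j' ≤ j → (i', j') ≠ (i, j) →
    rho F b (b i' * u j') < rho F b (b i * u j)

def WWB (F : Type*) [Field F] {n : ℕ} (b u : Fin n → Fin n → F) (i j : Fin n) : Prop :=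
  (∀ i' : Fin n, i' < i → rho F b (b i' * u j) < rho F b (b i * u j)) ∧
  (∀ j' : Fin n, j' < j → rho F b (b i * u j') < rho F b (b i * u j))

def OWB (F : Type*) [Field F] {n : ℕ} (b u : Fin n → Fin n → F) (i j : Fin n) : Prop :=
  ∀ i' : Fin n, i' < i → rho F b (b i' * u j) < rho F b (b i * u j)

def LambdaWB (F : Type*) [Field F] {n : ℕ} (b u : Fin n → Fin n → F) (i : Fin n) : Set ℕ :=
  {l | ∃ j : Fin n, WB F b u i j ∧ rho F b (b i * u j) = l}

def LambdaOWB (F : Type*) [Field F] {n : ℕ} (b u : Fin n → Fin n → F) (i : Fin n) : Set ℕ :=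
  {l | ∃ j : Fin n, OWB F b u i j ∧ rho F b (b i * u j) = l}

noncomputable def sigmaWB (F : Type*) [Field F] {n : ℕ} (b u : Fin n → Fin n → F)
    (i : Fin n) : ℕ :=
  (LambdaWB F b u i).ncard

noncomputable def sigmaOWB (F : Type*) [Field F] {n : ℕ} (b u : Fin n → Fin n → F)
    (i : Fin n) : ℕ :=
  (LambdaOWB F b u i).ncard

def VWB (F : Type*) [Field F] {n : ℕ} (b u : Fin n → Fin n → F) (l : ℕ) : Set (Fin n) :=
  {i | ∃ j : Fin n, WB F b u i j ∧ rho F b (b i * u j) = l}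

def VOWB (F : Type*) [Field F] {n : ℕ} (b u : Fin n → Fin n → F) (l : ℕ) : Set (Fin n) :=
  {i | ∃ j : Fin n, OWB F b u i j ∧ rho F b (b i * u j) = l}

noncomputable def muWB (F : Type*) [Field F] {n : ℕ} (b u : Fin n → Fin n → F)
    (l : ℕ) : ℕ :=
  (VWB F b u l).ncard

noncomputable def muOWB (F : Type*) [Field F] {n : ℕ} (b u : Fin n → Fin n → F)
    (l : ℕ) : ℕ :=
  (VOWB F b u l).ncard

noncomputable def hwt {F : Type*} [Field F] {n : ℕ} (v : Fin n → F) : ℕ :=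
  Set.ncard {i | v i ≠ 0}

section AuxStmt5

variable {F : Type*} [Field F] {n : ℕ}

lemma dot_mul_comm' (a b c : Fin n → F) :
    dotProduct (a * c) b = dotProduct (b * c) a := by
  unfold dotProduct
  exact Finset.sum_congr rfl fun t _ => by simp only [Pi.mul_apply]; ring

lemma mem_Lspan_iff {g h : Fin n → Fin n → F} (hg : IsBasisFam F g)
    (hGH : ∀ i j : Fin n,
      dotProduct (g i) (h j) = if (i : ℕ) + (j : ℕ) + 1 = n then 1 else 0)
    (v : Fin n → F) (l : ℕ) :
    v ∈ Lspan F g l ↔ ∀ m : Fin n, (m : ℕ) < n - l → dotProduct v (h m) = 0 := by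
  classical
  let B : Module.Basis (Fin n) F (Fin n → F) := Module.Basis.mk hg.1 hg.2.ge
  have hB : ∀ a : Fin n, B a = g a := fun a => Module.Basis.mk_apply _ _ _
  constructor
  · intro hv m hm
    induction hv using Submodule.span_induction with
    | mem x hx =>
        obtain ⟨a, ha, rfl⟩ := hx
        rw [hGH a m, if_neg]
        have := a.isLt
        simp only [Set.mem_setOf_eq] at ha
        omega
    | zero => simp
    | add x y _ _ hx hy => rw [add_dotProduct, hx, hy, add_zero]
    | smul c x _ hx => rw [smul_dotProduct, hx, smul_zero]
  · intro hv
    have hmem : v ∈ Submodule.span F (B '' {i : Fin n | (i : ℕ) < l}) := by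
      rw [Module.Basis.mem_span_image]
      intro a ha
      simp only [Finset.mem_coe, Finsupp.mem_support_iff] at ha
      simp only [Set.mem_setOf_eq]
      by_contra hal
      push_neg at hal
      have han := a.isLt
      have hln : l ≤ (a : ℕ) := hal
      -- use m = n - 1 - a
      set m : Fin n := ⟨n - 1 - (a : ℕ), by omega⟩ with hm
      have hm2 : (m : ℕ) < n - l := by show n - 1 - (a:ℕ) < n - l; omega
      have hdot := hv m hm2
      -- compute dot product
      have hv' : v = ∑ b : Fin n, B.repr v b • B b := (B.sum_repr v).symm
      rw [hv'] at hdot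
      have : dotProduct (∑ b : Fin n, B.repr v b • B b) (h m)
          = ∑ b : Fin n, B.repr v b * dotProduct (g b) (h m) := by
        simp only [dotProduct, Finset.sum_apply, Pi.smul_apply, smul_eq_mul, hB,
          Finset.sum_mul, Finset.mul_sum]
        rw [Finset.sum_comm]
        exact Finset.sum_congr rfl fun b _ => Finset.sum_congr rfl fun t _ => by ring
      rw [this] at hdot
      have hsum : ∑ b : Fin n, B.repr v b * dotProduct (g b) (h m)
          = B.repr v a := by
        rw [Finset.sum_eq_single a]
        · rw [hGH a m, if_pos (by simp only [hm]; omega), mul_one]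
        · intro b _ hb
          rw [hGH b m, if_neg, mul_zero]
          intro hcon
          apply hb
          apply Fin.ext
          have : (m : ℕ) = n - 1 - (a : ℕ) := rfl
          omega
        · intro hcon; exact absurd (Finset.mem_univ a) hcon
      rw [hsum] at hdot
      exact ha hdot
    have heq : (B '' {i : Fin n | (i : ℕ) < l}) = (g '' {i : Fin n | (i : ℕ) < l}) := by
      apply Set.image_congr
      intro a _; exact hB a
    rw [heq] at hmem
    exact hmem

lemma Lspan_top {g : Fin n → Fin n → F} (hg : IsBasisFam F g) :
    Lspan F g n = ⊤ := by
  rw [Lspan]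
  have hset : {i : Fin n | (i : ℕ) < n} = Set.univ := by
    ext a; simp [a.isLt]
  rw [hset, Set.image_univ, hg.2]

lemma rho_le_iff {g : Fin n → Fin n → F} (hg : IsBasisFam F g) (v : Fin n → F) (l : ℕ) :
    rho F g v ≤ l ↔ v ∈ Lspan F g l := by
  have hmono : ∀ l₁ l₂ : ℕ, l₁ ≤ l₂ → Lspan F g l₁ ≤ Lspan F g l₂ := by
    intro l₁ l₂ h12
    apply Submodule.span_mono
    apply Set.image_mono
    intro a ha; exact lt_of_lt_of_le ha h12
  have hne : v ∈ Lspan F g n := by rw [Lspan_top hg]; trivial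
  constructor
  · intro hle
    have hmem := Nat.sInf_mem (⟨n, hne⟩ : Set.Nonempty {l | v ∈ Lspan F g l})
    exact hmono _ _ hle hmem
  · intro hv
    exact Nat.sInf_le hv

lemma key_aux {g h u : Fin n → Fin n → F} (hg : IsBasisFam F g)
    (hGH : ∀ i j : Fin n,
      dotProduct (g i) (h j) = if (i : ℕ) + (j : ℕ) + 1 = n then 1 else 0)
    (i j : Fin n) (k : ℕ) (hk1 : 1 ≤ k) (hk2 : k ≤ n) :
    (rho F g (g i * u j) = k ∧ WB F g u i j) ↔
      (dotProduct (g i * u j) (h ⟨n - k, Nat.sub_lt (by omega) hk1⟩) ≠ 0 ∧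
        ∀ a b v : Fin n, a ≤ i → (b : ℕ) ≤ n - k → v ≤ j →
          ¬((a : ℕ) = (i : ℕ) ∧ (b : ℕ) = n - k ∧ (v : ℕ) = (j : ℕ)) →
          dotProduct (g a * u v) (h b) = 0) := by
  have hn : 0 < n := lt_of_lt_of_le hk1 hk2
  set mk : Fin n := ⟨n - k, Nat.sub_lt (by omega) hk1⟩ with hmk
  have hrle : ∀ (w : Fin n → F) (l : ℕ), rho F g w ≤ l ↔
      ∀ m : Fin n, (m : ℕ) < n - l → dotProduct w (h m) = 0 :=
    fun w l => (rho_le_iff hg w l).trans (mem_Lspan_iff hg hGH w l)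
  constructor
  · rintro ⟨hrho, hwb⟩
    have hle : rho F g (g i * u j) ≤ k := le_of_eq hrho
    rw [hrle] at hle
    constructor
    · intro hQ
      have : rho F g (g i * u j) ≤ k - 1 := by
        rw [hrle]
        intro m hm
        rcases Nat.lt_or_ge (m : ℕ) (n - k) with hlt | hge
        · exact hle m hlt
        · have : m = mk := Fin.ext (by show (m:ℕ) = n - k; omega)
          rw [this]; exact hQ
      omega
    · intro a b v ha hb hv hne
      by_cases hav : a = i ∧ v = j
      · obtain ⟨rfl, rfl⟩ := hav
        have hbne : (b : ℕ) < n - k := by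
          rcases Nat.lt_or_ge (b : ℕ) (n - k) with h' | h'
          · exact h'
          · exact absurd ⟨rfl, by omega, rfl⟩ hne
        exact hle b hbne
      · have : rho F g (g a * u v) < rho F g (g i * u j) := by
          apply hwb a v ha hv
          intro hcon
          apply hav
          exact ⟨congrArg Prod.fst hcon, congrArg Prod.snd hcon⟩
        rw [hrho] at this
        have h2 : rho F g (g a * u v) ≤ k - 1 := by omega
        rw [hrle] at h2
        exact h2 b (by omega)
  · rintro ⟨hQ, hP⟩
    have hle : rho F g (g i * u j) ≤ k := by
      rw [hrle]
      intro m hm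
      exact hP i m j le_rfl (by omega) le_rfl (by omega)
    have hgt : ¬ rho F g (g i * u j) ≤ k - 1 := by
      rw [hrle]
      intro hcon
      exact hQ (hcon mk (by show n - k < n - (k - 1); omega))
    have hrho : rho F g (g i * u j) = k := by omega
    refine ⟨hrho, ?_⟩
    intro a v ha hv hne
    rw [hrho]
    have : rho F g (g a * u v) ≤ k - 1 := by
      rw [hrle]
      intro m hm
      apply hP a m v ha (by omega) hv
      intro ⟨h1, h2, h3⟩
      exact hne (Prod.ext (Fin.ext h1) (Fin.ext h3))
    omega

end AuxStmt5

theorem stmt5 {F : Type*} [Field F] {n : ℕ} (g h u : Fin n → Fin n → F)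
    (hg : IsBasisFam F g) (hh : IsBasisFam F h) (hu : IsBasisFam F u)
    (hGH : ∀ i j : Fin n,
      dotProduct (g i) (h j) = if (i : ℕ) + (j : ℕ) + 1 = n then 1 else 0)
    (i j : Fin n) (k : ℕ) (hk1 : 1 ≤ k) (hk2 : k ≤ n) :
    (rho F g (g i * u j) = k ∧ WB F g u i j) ↔
      (rho F h (h ⟨n - k, by omega⟩ * u j) = n - (i : ℕ) ∧
        WB F h u ⟨n - k, by omega⟩ j) := by
  have hn : 0 < n := lt_of_lt_of_le hk1 hk2
  have hHG : ∀ a b : Fin n,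
      dotProduct (h a) (g b) = if (a : ℕ) + (b : ℕ) + 1 = n then 1 else 0 := by
    intro a b
    rw [dotProduct_comm, hGH b a,
      if_congr (by omega : (b : ℕ) + (a : ℕ) + 1 = n ↔ (a : ℕ) + (b : ℕ) + 1 = n) rfl rfl]
  have hi := i.isLt
  have hk1' : 1 ≤ n - (i : ℕ) := by omega
  have hk2' : n - (i : ℕ) ≤ n := by omega
  rw [key_aux hg hGH i j k hk1 hk2, key_aux hh hHG ⟨n - k, by omega⟩ j (n - (i : ℕ)) hk1' hk2']
  have hnn : n - (n - (i : ℕ)) = (i : ℕ) := by omega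
  simp only [hnn, Fin.le_def, Fin.val_mk, Fin.eta]
  constructor
  · rintro ⟨hQ, hP⟩
    refine ⟨by rw [dot_mul_comm']; exact hQ, ?_⟩
    intro a b v ha hb hv hne
    rw [dot_mul_comm']
    exact hP b a v hb ha hv (fun ⟨h1, h2, h3⟩ => hne ⟨by omega, by omega, h3⟩)
  · rintro ⟨hQ, hP⟩
    refine ⟨by rw [dot_mul_comm'] at hQ; exact hQ, ?_⟩
    intro a b v ha hb hv hne
    rw [dot_mul_comm']
    exact hP b a v hb ha hv (fun ⟨h1, h2, h3⟩ => hne ⟨by omega, by omega, h3⟩)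
end

section
/- Let B, U be bases of F_q^n and I ⊆ {1,...,n} nonempty. The minimum distance of the dual code C^⊥(B,I) of C(B,I) = span{b_i : i ∈ I} satisfies d(C^⊥(B,I)) ≥ min{μ̄^OWB_{(B,U)}(l) : l ∉ I} ≥ min{μ̄^WB_{(B,U)}(l) : l ∉ I}. -/
section Aux
variable {F : Type*} [Field F] {n : ℕ}

lemma Lspan_mono (b : Fin n → Fin n → F) {l l' : ℕ} (h : l ≤ l') :
    Lspan F b l ≤ Lspan F b l' :=
  Submodule.span_mono (Set.image_mono (fun _ hi => lt_of_lt_of_le hi h))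

lemma mem_Lspan_rho (b : Fin n → Fin n → F) (hb : IsBasisFam F b) (v : Fin n → F) :
    v ∈ Lspan F b (rho F b v) := by
  have hun : ({i : Fin n | (i : ℕ) < n} : Set (Fin n)) = Set.univ := by
    ext i; simp [i.isLt]
  have hn : v ∈ Lspan F b n := by
    rw [Lspan, hun, Set.image_univ, hb.2]; trivial
  exact Nat.sInf_mem (s := {l | v ∈ Lspan F b l}) ⟨n, hn⟩

lemma not_mem_Lspan_of_lt_rho (b : Fin n → Fin n → F) {v : Fin n → F} {l : ℕ}
    (h : l < rho F b v) : v ∉ Lspan F b l := fun hv =>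
  absurd (Nat.sInf_le hv) (not_le.mpr h)

lemma dot_eq_zero_of_mem_Lspan {b : Fin n → Fin n → F} {c : Fin n → F} {m : ℕ}
    (hz : ∀ i : Fin n, (i : ℕ) < m → dotProduct (b i) c = 0)
    {x : Fin n → F} (hx : x ∈ Lspan F b m) : dotProduct x c = 0 := by
  induction hx using Submodule.span_induction with
  | mem x hx => obtain ⟨i, hi, rfl⟩ := hx; exact hz i hi
  | zero => simp [zero_dotProduct]
  | add x y _ _ hx hy => simp [add_dotProduct, hx, hy]
  | smul a x _ hx => simp [smul_dotProduct, hx]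

lemma dot_mul_assoc (x y c : Fin n → F) :
    dotProduct (x * y) c = dotProduct x (y * c) := by
  simp [dotProduct, Pi.mul_apply, mul_assoc]

lemma dot_sum (v : Fin n → F) {ι : Type*} (s : Finset ι) (f : ι → Fin n → F) :
    dotProduct v (∑ i ∈ s, f i) = ∑ i ∈ s, dotProduct v (f i) := by
  simp [dotProduct, Finset.mul_sum, Finset.sum_apply]
  rw [Finset.sum_comm]

end Aux


theorem stmt11 {F : Type*} [Field F] {n : ℕ} (b u : Fin n → Fin n → F)
    (hb : IsBasisFam F b) (hu : IsBasisFam F u)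
    (I : Set (Fin n)) (hI : I.Nonempty) :
    (∀ c : Fin n → F,
        (∀ v ∈ Submodule.span F (b '' I), dotProduct v c = 0) → c ≠ 0 →
        sInf {m : ℕ | ∃ l : Fin n, l ∉ I ∧ m = muOWB F b u ((l : ℕ) + 1)} ≤ hwt c) ∧
    sInf {m : ℕ | ∃ l : Fin n, l ∉ I ∧ m = muWB F b u ((l : ℕ) + 1)} ≤
      sInf {m : ℕ | ∃ l : Fin n, l ∉ I ∧ m = muOWB F b u ((l : ℕ) + 1)} := by
  classical
  constructor
  · intro c hc hc0
    -- there is some basis vector not orthogonal to c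
    have hex : ∃ i : Fin n, dotProduct (b i) c ≠ 0 := by
      by_contra h
      push_neg at h
      apply hc0
      have hall : ∀ x : Fin n → F, dotProduct x c = 0 := by
        intro x
        have hx : x ∈ Submodule.span F (Set.range b) := by rw [hb.2]; trivial
        induction hx using Submodule.span_induction with
        | mem x hx => obtain ⟨i, rfl⟩ := hx; exact h i
        | zero => simp [zero_dotProduct]
        | add x y _ _ hx hy => simp [add_dotProduct, hx, hy]
        | smul a x _ hx => simp [smul_dotProduct, hx]
      funext k
      simpa [single_dotProduct] using hall (Pi.single k 1)
    -- minimal such index i₀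
    let T : Finset (Fin n) := Finset.univ.filter (fun i => dotProduct (b i) c ≠ 0)
    have hTne : T.Nonempty := by
      obtain ⟨i, hi⟩ := hex; exact ⟨i, by simp [T, hi]⟩
    set i₀ : Fin n := T.min' hTne with hi₀def
    have hi₀ : dotProduct (b i₀) c ≠ 0 := by
      have := T.min'_mem hTne
      simpa [T] using this
    have hmin : ∀ i : Fin n, (i : ℕ) < (i₀ : ℕ) → dotProduct (b i) c = 0 := by
      intro i hi
      by_contra h
      have hle : i₀ ≤ i := T.min'_le i (by simp [T, h])
      exact absurd hi (not_lt.mpr hle)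
    have hi₀I : i₀ ∉ I := fun hmem =>
      hi₀ (hc (b i₀) (Submodule.subset_span ⟨i₀, hmem, rfl⟩))
    have hzero : ∀ x ∈ Lspan F b (i₀ : ℕ), dotProduct x c = 0 := fun _ hx =>
      dot_eq_zero_of_mem_Lspan hmin hx
    -- key nonvanishing lemma
    have hkey : ∀ x : Fin n → F, x ∈ Lspan F b ((i₀ : ℕ) + 1) → x ∉ Lspan F b (i₀ : ℕ) →
        dotProduct x c ≠ 0 := by
      intro x hx1 hx0
      have hidx : ({i : Fin n | (i : ℕ) < (i₀ : ℕ) + 1})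
          = insert i₀ {i : Fin n | (i : ℕ) < (i₀ : ℕ)} := by
        ext i
        simp only [Set.mem_setOf_eq, Set.mem_insert_iff, Nat.lt_succ_iff, le_iff_lt_or_eq,
          Fin.ext_iff]
        tauto
      have hset : (b '' {i : Fin n | (i : ℕ) < (i₀ : ℕ) + 1})
          = insert (b i₀) (b '' {i : Fin n | (i : ℕ) < (i₀ : ℕ)}) := by
        rw [hidx, Set.image_insert_eq]
      rw [Lspan, hset, Submodule.mem_span_insert] at hx1
      obtain ⟨a, z, hz, rfl⟩ := hx1
      have hzc : dotProduct z c = 0 := hzero z hz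
      have ha : a ≠ 0 := by
        rintro rfl
        exact hx0 (by simpa [Lspan] using hz)
      simp only [add_dotProduct, smul_dotProduct, hzc, add_zero, smul_eq_mul]
      exact mul_ne_zero ha hi₀
    -- the set V and witnesses
    set V : Set (Fin n) := VOWB F b u ((i₀ : ℕ) + 1) with hVdef
    have hwit : ∀ i : ↥V, ∃ j : Fin n, OWB F b u (i : Fin n) j ∧
        rho F b (b (i : Fin n) * u j) = (i₀ : ℕ) + 1 := fun i => i.2
    choose j hjOWB hjrho using hwit
    let w : ↥V → Fin n → F := fun i => u (j i) * c
    have hdiag : ∀ i : ↥V, dotProduct (b (i : Fin n)) (w i) ≠ 0 := by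
      intro i
      have h1 : b (i : Fin n) * u (j i) ∈ Lspan F b ((i₀ : ℕ) + 1) := by
        have := mem_Lspan_rho b hb (b (i : Fin n) * u (j i))
        rwa [hjrho i] at this
      have h2 : b (i : Fin n) * u (j i) ∉ Lspan F b (i₀ : ℕ) :=
        not_mem_Lspan_of_lt_rho b (by rw [hjrho i]; omega)
      have := hkey _ h1 h2
      rwa [dot_mul_assoc] at this
    have hoff : ∀ i i' : ↥V, (i : Fin n) < (i' : Fin n) →
        dotProduct (b (i : Fin n)) (w i') = 0 := by
      intro i i' hlt
      have hρ : rho F b (b (i : Fin n) * u (j i')) < (i₀ : ℕ) + 1 := by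
        rw [← hjrho i']
        exact hjOWB i' _ hlt
      have hmem : b (i : Fin n) * u (j i') ∈ Lspan F b (i₀ : ℕ) :=
        Lspan_mono b (by omega) (mem_Lspan_rho b hb _)
      have := hzero _ hmem
      rwa [dot_mul_assoc] at this
    -- linear independence of the restricted vectors
    haveI : Fintype ↥V := Fintype.ofFinite _
    set K : Set (Fin n) := {k | c k ≠ 0} with hKdef
    haveI : Fintype ↥K := Fintype.ofFinite _
    let π : (Fin n → F) →ₗ[F] (↥K → F) := LinearMap.funLeft F F Subtype.val
    have hLI : LinearIndependent F (fun i : ↥V => π (w i)) := by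
      rw [Fintype.linearIndependent_iff]
      intro g hg
      have hsum : ∑ i : ↥V, g i • w i = 0 := by
        funext k
        by_cases hk : c k ≠ 0
        · have := congrFun hg ⟨k, hk⟩
          simpa [π, LinearMap.funLeft_apply, Finset.sum_apply] using this
        · push_neg at hk
          simp [Finset.sum_apply, w, Pi.mul_apply, hk]
      have key : ∀ m : ℕ, ∀ i : ↥V, ((i : Fin n) : ℕ) = m → g i = 0 := by
        intro m
        induction m using Nat.strong_induction_on with
        | _ m ih =>
          intro i him
          have h0 : dotProduct (b (i : Fin n)) (∑ i' : ↥V, g i' • w i') = 0 := by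
            rw [hsum]; simp [dotProduct]
          rw [dot_sum] at h0
          have h1 : ∀ i' : ↥V, i' ∈ Finset.univ → i' ≠ i →
              dotProduct (b (i : Fin n)) (g i' • w i') = 0 := by
            intro i' _ hne
            rcases lt_trichotomy ((i' : Fin n)) ((i : Fin n)) with h | h | h
            · have hg0 : g i' = 0 := ih ((i' : Fin n) : ℕ) (by omega) i' rfl
              simp [hg0]
            · exact absurd (Subtype.ext h) hne
            · rw [dotProduct_smul, hoff i i' h, smul_zero]
          rw [Finset.sum_eq_single i h1 (by simp)] at h0
          rw [dotProduct_smul, smul_eq_mul] at h0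
          rcases mul_eq_zero.mp h0 with h | h
          · exact h
          · exact absurd h (hdiag i)
      exact fun i => key ((i : Fin n) : ℕ) i rfl
    have hcard : Fintype.card ↥V ≤ Fintype.card ↥K := by
      have h := hLI.fintype_card_le_finrank
      rwa [Module.finrank_fintype_fun_eq_card] at h
    have h1 : muOWB F b u ((i₀ : ℕ) + 1) ≤ hwt c := by
      rw [muOWB, hwt]
      rw [← Nat.card_coe_set_eq, ← Nat.card_coe_set_eq,
        Nat.card_eq_fintype_card, Nat.card_eq_fintype_card]
      exact hcard
    exact le_trans (Nat.sInf_le ⟨i₀, hi₀I, rfl⟩) h1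
  · -- WB implies OWB part
    by_cases hne : ∃ l : Fin n, l ∉ I
    · obtain ⟨l₀, hl₀⟩ := hne
      have hmemO : sInf {m : ℕ | ∃ l : Fin n, l ∉ I ∧ m = muOWB F b u ((l : ℕ) + 1)}
          ∈ {m : ℕ | ∃ l : Fin n, l ∉ I ∧ m = muOWB F b u ((l : ℕ) + 1)} :=
        Nat.sInf_mem ⟨muOWB F b u ((l₀ : ℕ) + 1), l₀, hl₀, rfl⟩
      obtain ⟨l, hl, heq⟩ := hmemO
      have hsub : VWB F b u ((l : ℕ) + 1) ⊆ VOWB F b u ((l : ℕ) + 1) := by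
        rintro i ⟨j', hwb, hrho⟩
        refine ⟨j', fun i' hi' => ?_, hrho⟩
        exact hwb i' j' (le_of_lt hi') le_rfl (by
          intro hpair
          exact absurd (congrArg Prod.fst hpair) (ne_of_lt hi'))
      have hmu : muWB F b u ((l : ℕ) + 1) ≤ muOWB F b u ((l : ℕ) + 1) :=
        Set.ncard_le_ncard hsub (Set.toFinite _)
      calc sInf {m : ℕ | ∃ l : Fin n, l ∉ I ∧ m = muWB F b u ((l : ℕ) + 1)}
          ≤ muWB F b u ((l : ℕ) + 1) := Nat.sInf_le ⟨l, hl, rfl⟩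
        _ ≤ muOWB F b u ((l : ℕ) + 1) := hmu
        _ = _ := heq.symm
    · push_neg at hne
      have h1 : {m : ℕ | ∃ l : Fin n, l ∉ I ∧ m = muWB F b u ((l : ℕ) + 1)} = ∅ := by
        ext m; simp only [Set.mem_setOf_eq, Set.mem_empty_iff_false, iff_false]
        rintro ⟨l, hl, -⟩; exact hl (hne l)
      rw [h1, Nat.sInf_empty]
      exact Nat.zero_le _
end

section
/- Let R be an F_q-algebra with weight function ρ : R → Γ ∪ {−∞} and φ : R → F_q^n a surjective F_q-algebra morphism (φ linear, φ(fg) = φ(f) ∗ φ(g)). Let Δ(R,ρ,φ) = {α(1), ..., α(n)} be defined recursively by α(1) = 0 and α(i) the smallest element of Γ greater than α(1),...,α(i−1) with φ(R_γ) ⊊ φ(R_{α(i)}) for all γ ≺ α(i). Then B = {φ(f_{α(1)}), ..., φ(f_{α(n)})} is a basis of F_q^n, where f_{α(i)} ∈ R satisfies ρ(f_{α(i)}) = α(i). -/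
structure MonOrd (r : ℕ) where
  lt : (Fin r → ℕ) → (Fin r → ℕ) → Prop
  irrefl : ∀ a, ¬ lt a a
  trans : ∀ a b c, lt a b → lt b c → lt a c
  total : ∀ a b, lt a b ∨ a = b ∨ lt b a
  zero_le : ∀ a, a = 0 ∨ lt 0 a
  add_right : ∀ a b c, lt a b → lt (a + c) (b + c)

def MonOrd.wlt {r : ℕ} (mo : MonOrd r)
    (x y : WithBot (Fin r → ℕ)) : Prop :=
  (x = ⊥ ∧ y ≠ ⊥) ∨ ∃ a b : Fin r → ℕ, x = ↑a ∧ y = ↑b ∧ mo.lt a b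

def MonOrd.wle {r : ℕ} (mo : MonOrd r)
    (x y : WithBot (Fin r → ℕ)) : Prop :=
  mo.wlt x y ∨ x = y

structure WeightFunction (Fq R : Type*) [Field Fq] [CommRing R] [Algebra Fq R]
    (r : ℕ) where
  mo : MonOrd r
  Γ : Set (Fin r → ℕ)
  add_mem : ∀ a ∈ Γ, ∀ b ∈ Γ, a + b ∈ Γ
  rho : R → WithBot (Fin r → ℕ)
  surj : ∀ γ ∈ Γ, ∃ f : R, rho f = ↑γ
  mem_Γ : ∀ f : R, rho f ≠ ⊥ → ∃ γ ∈ Γ, rho f = ↑γ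
  W0 : ∀ f : R, rho f = ⊥ ↔ f = 0
  W1 : ∀ (a : Fq) (f : R), a ≠ 0 → rho (a • f) = rho f
  W2a : ∀ f g : R, mo.wle (rho (f + g)) (rho f) ∨ mo.wle (rho (f + g)) (rho g)
  W2b : ∀ f g : R, mo.wlt (rho f) (rho g) → rho (f + g) = rho g
  W3 : ∀ f g h : R, mo.wlt (rho f) (rho g) → h ≠ 0 →
    mo.wlt (rho (f * h)) (rho (g * h))
  W4 : ∀ f g : R, f ≠ 0 → g ≠ 0 → rho f = rho g →
    ∃ a : Fq, a ≠ 0 ∧ mo.wlt (rho (f - a • g)) (rho g)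
  W5 : ∀ f g : R, f ≠ 0 → g ≠ 0 → ∀ γ δ : Fin r → ℕ,
    rho f = ↑γ → rho g = ↑δ → rho (f * g) = ↑(γ + δ)

def Rsub {Fq R : Type*} [Field Fq] [CommRing R] [Algebra Fq R] {r : ℕ}
    (W : WeightFunction Fq R r) (γ : Fin r → ℕ) : Set R :=
  {h : R | W.mo.wle (W.rho h) ↑γ}

def IsJump {Fq R : Type*} [Field Fq] [CommRing R] [Algebra Fq R] {r n : ℕ}
    (W : WeightFunction Fq R r) (φ : R → Fin n → Fq) (η : Fin r → ℕ) : Prop :=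
  η ∈ W.Γ ∧ ∀ γ ∈ W.Γ, W.mo.lt γ η → φ '' Rsub W γ ⊂ φ '' Rsub W η

lemma MonOrd.eq_or_lt_of_le {r : ℕ} (mo : MonOrd r) {a b : Fin r → ℕ} (h : a ≤ b) :
    a = b ∨ mo.lt a b := by
  rcases mo.zero_le (b - a) with h0 | h0
  · left
    funext i
    have h1 : a i ≤ b i := h i
    have h2 := congrFun h0 i
    simp only [Pi.sub_apply, Pi.zero_apply] at h2
    omega
  · right
    have h1 := mo.add_right 0 (b - a) a h0
    rw [zero_add] at h1
    have hba : b - a + a = b := by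
      funext i
      have h2 : a i ≤ b i := h i
      simp only [Pi.sub_apply, Pi.add_apply]
      omega
    rwa [hba] at h1

lemma MonOrd.wf {r : ℕ} (mo : MonOrd r) : WellFounded mo.lt := by
  letI : IsIrrefl (Fin r → ℕ) mo.lt := ⟨mo.irrefl⟩
  letI : IsTrans (Fin r → ℕ) mo.lt := ⟨mo.trans⟩
  letI : IsStrictOrder (Fin r → ℕ) mo.lt := {}
  rw [RelEmbedding.wellFounded_iff_isEmpty]
  constructor
  intro g
  obtain ⟨m, k, hmk, hle⟩ :=
    (wellQuasiOrdered_le (α := Fin r → ℕ)) (fun i => g i)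
  have hlt : mo.lt (g k) (g m) := g.map_rel_iff.2 hmk
  rcases mo.eq_or_lt_of_le hle with h | h
  · rw [h] at hlt
    exact mo.irrefl _ hlt
  · exact mo.irrefl _ (mo.trans _ _ _ h hlt)

lemma MonOrd.wlt_coe_of_wle_of_lt {r : ℕ} (mo : MonOrd r) {x : WithBot (Fin r → ℕ)}
    {γ δ : Fin r → ℕ} (h : mo.wle x ↑γ) (hlt : mo.lt γ δ) : mo.wlt x ↑δ := by
  rcases h with h | h
  · rcases h with ⟨hb, -⟩ | ⟨a, b, ha, hb, hab⟩
    · exact Or.inl ⟨hb, WithBot.coe_ne_bot⟩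
    · have hbγ : b = γ := WithBot.coe_injective hb.symm
      subst hbγ
      exact Or.inr ⟨a, δ, ha, rfl, mo.trans _ _ _ hab hlt⟩
  · exact Or.inr ⟨γ, δ, h, rfl, hlt⟩

theorem stmt13 {Fq R : Type*} [Field Fq] [CommRing R] [Algebra Fq R] {r n : ℕ}
    (W : WeightFunction Fq R r) (φ : R → Fin n → Fq)
    (hφsurj : Function.Surjective φ) (hφlin : IsLinearMap Fq φ)
    (hφmul : ∀ f g : R, φ (f * g) = φ f * φ g)
    (α : Fin n → Fin r → ℕ)
    (hα0 : ∀ h0 : 0 < n, α ⟨0, h0⟩ = 0)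
    (hmono : ∀ i j : Fin n, i < j → W.mo.lt (α i) (α j))
    (hjump : ∀ i : Fin n, IsJump W φ (α i))
    (hcompl : ∀ η : Fin r → ℕ, IsJump W φ η → ∃ i : Fin n, α i = η)
    (f : Fin n → R) (hf : ∀ i : Fin n, W.rho (f i) = ↑(α i)) :
    LinearIndependent Fq (fun i : Fin n => φ (f i)) ∧
    Submodule.span Fq (Set.range fun i : Fin n => φ (f i)) = ⊤ := by
  set M : Submodule Fq (Fin n → Fq) :=
    Submodule.span Fq (Set.range fun i : Fin n => φ (f i)) with hM
  have hmem : ∀ i : Fin n, φ (f i) ∈ M := fun i =>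
    Submodule.subset_span ⟨i, rfl⟩
  have key : ∀ δ : Fin r → ℕ, ∀ h : R, W.rho h = ↑δ → φ h ∈ M := by
    intro δ
    induction δ using WellFounded.induction (MonOrd.wf W.mo) with
    | _ δ IH =>
    intro h hδ
    have hne : h ≠ 0 := by
      intro h0
      rw [(W.W0 h).mpr h0] at hδ
      exact WithBot.coe_ne_bot hδ.symm
    have hδΓ : δ ∈ W.Γ := by
      obtain ⟨γ, hγΓ, hγ⟩ := W.mem_Γ h (by rw [hδ]; exact WithBot.coe_ne_bot)
      rw [hδ] at hγ
      rwa [WithBot.coe_injective hγ]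
    by_cases hj : ∃ j : Fin n, α j = δ
    · obtain ⟨j, rfl⟩ := hj
      have hfj : f j ≠ 0 := by
        intro h0
        rw [← W.W0 (f j)] at h0
        rw [hf j] at h0
        exact WithBot.coe_ne_bot h0
      obtain ⟨a, ha0, hlt⟩ := W.W4 h (f j) hne hfj (by rw [hδ, hf j])
      have hsplit : φ h = φ (h - a • f j) + a • φ (f j) := by
        rw [hφlin.map_sub, hφlin.map_smul]
        abel
      rw [hsplit]
      refine M.add_mem ?_ (M.smul_mem a (hmem j))
      rw [hf j] at hlt
      rcases hlt with ⟨hb, -⟩ | ⟨a', b', ha', hb', hab⟩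
      · rw [(W.W0 _).mp hb, hφlin.map_zero]
        exact M.zero_mem
      · have hb'eq : b' = α j := WithBot.coe_injective hb'.symm
        subst hb'eq
        exact IH a' hab _ ha'
    · have hnotjump : ¬ IsJump W φ δ := fun hJ => hj (hcompl δ hJ)
      rw [IsJump, not_and] at hnotjump
      have h2 := hnotjump hδΓ
      push_neg at h2
      obtain ⟨γ, hγΓ, hγδ, hnss⟩ := h2
      have hsub : φ '' Rsub W γ ⊆ φ '' Rsub W δ := by
        rintro v ⟨x, hx, rfl⟩
        exact ⟨x, Or.inl (W.mo.wlt_coe_of_wle_of_lt hx hγδ), rfl⟩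
      have hsub2 : φ '' Rsub W δ ⊆ φ '' Rsub W γ := by
        by_contra hc
        exact hnss (ssubset_iff_subset_not_subset.mpr ⟨hsub, hc⟩)
      have hhmem : φ h ∈ φ '' Rsub W δ := ⟨h, Or.inr (by rw [hδ]), rfl⟩
      obtain ⟨h', hh', hφh⟩ := hsub2 hhmem
      rw [← hφh]
      rcases hh' with hlt' | heq
      · rcases hlt' with ⟨hb, -⟩ | ⟨a', b', ha', hb', hab⟩
        · rw [(W.W0 _).mp hb, hφlin.map_zero]
          exact M.zero_mem
        · have hb'eq : b' = γ := WithBot.coe_injective hb'.symm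
          subst hb'eq
          exact IH a' (W.mo.trans _ _ _ hab hγδ) _ ha'
      · exact IH γ hγδ _ heq
  have spantop : M = ⊤ := by
    rw [eq_top_iff]
    intro v _
    obtain ⟨h, rfl⟩ := hφsurj v
    by_cases hh : h = 0
    · subst hh
      rw [hφlin.map_zero]
      exact M.zero_mem
    · have hne : W.rho h ≠ ⊥ := fun hb => hh ((W.W0 h).mp hb)
      obtain ⟨γ, -, hγ⟩ := W.mem_Γ h hne
      exact key γ h hγ
  refine ⟨?_, spantop⟩
  apply linearIndependent_of_top_le_span_of_card_eq_finrank
  · rw [← hM, spantop]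
  · simp [Module.finrank_fin_fun]
end

section
/- Let R, ρ, φ, Δ(R,ρ,φ) = {α(1), ..., α(n)} and B = {b_i = φ(f_{α(i)})} be as in the order-domain code construction. If γ, λ ∈ Γ satisfy γ + λ = α(l) for some α(l) ∈ Δ(R,ρ,φ), then γ = α(i) and λ = α(j) for some i, j ∈ {1,...,n}, the pair (i,j) is well-behaving with respect to (B,B), and ρ̄_B(b_i ∗ b_j) = l. -/
namespace MonOrd

variable {r : ℕ} {mo : MonOrd r}

lemma wlt_coe_iff {a c : Fin r → ℕ} : mo.wlt ↑a ↑c ↔ mo.lt a c := by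
  constructor
  · rintro (⟨h, -⟩ | ⟨a', c', ha, hc, h⟩)
    · exact absurd h WithBot.coe_ne_bot
    · rw [WithBot.coe_inj] at ha hc
      subst ha; subst hc; exact h
  · exact fun h => Or.inr ⟨a, c, rfl, rfl, h⟩

lemma bot_wlt {c : Fin r → ℕ} : mo.wlt ⊥ ↑c := Or.inl ⟨rfl, WithBot.coe_ne_bot⟩

lemma wlt_trans {x y z} (h1 : mo.wlt x y) (h2 : mo.wlt y z) : mo.wlt x z := by
  rcases h1 with ⟨hx, hy⟩ | ⟨a, c, rfl, rfl, h⟩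
  · rcases h2 with ⟨hy', -⟩ | ⟨a', c', hy', rfl, -⟩
    · exact absurd hy' hy
    · exact Or.inl ⟨hx, WithBot.coe_ne_bot⟩
  · rcases h2 with ⟨hy', -⟩ | ⟨a', c', hy', rfl, h'⟩
    · exact absurd hy' WithBot.coe_ne_bot
    · rw [WithBot.coe_inj] at hy'
      subst hy'
      exact Or.inr ⟨a, c', rfl, rfl, mo.trans _ _ _ h h'⟩

lemma wle_wlt_trans {x y z} (h1 : mo.wle x y) (h2 : mo.wlt y z) : mo.wlt x z := by
  rcases h1 with h1 | rfl
  exacts [wlt_trans h1 h2, h2]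

lemma wlt_wle_trans {x y z} (h1 : mo.wlt x y) (h2 : mo.wle y z) : mo.wlt x z := by
  rcases h2 with h2 | rfl
  exacts [wlt_trans h1 h2, h1]

lemma wle_trans' {x y z} (h1 : mo.wle x y) (h2 : mo.wle y z) : mo.wle x z := by
  rcases h2 with h2 | rfl
  exacts [Or.inl (wle_wlt_trans h1 h2), h1]

lemma lt_of_le_of_ne'' {a c : Fin r → ℕ} (hle : a ≤ c) (hne : a ≠ c) : mo.lt a c := by
  have hc : a + (c - a) = c := by
    funext i
    have h2 : a i ≤ c i := hle i
    show a i + (c i - a i) = c i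
    omega
  rcases mo.zero_le (c - a) with h0 | h0
  · exact absurd (by rw [← hc, h0, add_zero]) hne
  · have h1 := mo.add_right 0 (c - a) a h0
    rwa [zero_add, add_comm, hc] at h1

lemma lt_wf (mo : MonOrd r) : WellFounded mo.lt := by
  haveI : IsIrrefl (Fin r → ℕ) mo.lt := ⟨mo.irrefl⟩
  haveI : IsTrans (Fin r → ℕ) mo.lt := ⟨mo.trans⟩
  haveI : IsStrictOrder (Fin r → ℕ) mo.lt := {}
  rw [RelEmbedding.wellFounded_iff_isEmpty]
  constructor
  intro g
  obtain ⟨i, j, hij, hle⟩ :=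
    (wellQuasiOrdered_le (α := Fin r → ℕ)) (fun k => g k)
  have hlt : mo.lt (g j) (g i) := g.map_rel_iff.2 hij
  rcases eq_or_ne (g i) (g j) with heq | hne
  · rw [heq] at hlt
    exact mo.irrefl _ hlt
  · exact mo.irrefl _ (mo.trans _ _ _ (lt_of_le_of_ne'' hle hne) hlt)

lemma add_lt' {a b c d : Fin r → ℕ} (mo : MonOrd r)
    (h1 : a = b ∨ mo.lt a b) (h2 : c = d ∨ mo.lt c d) (hne : ¬(a = b ∧ c = d)) :
    mo.lt (a + c) (b + d) := by
  rcases h1 with rfl | h1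
  · rcases h2 with rfl | h2
    · exact absurd ⟨rfl, rfl⟩ hne
    · have h3 := mo.add_right c d a h2
      rwa [add_comm c a, add_comm d a] at h3
  · rcases h2 with rfl | h2
    · exact mo.add_right a b c h1
    · refine mo.trans _ _ _ (mo.add_right a b c h1) ?_
      have h3 := mo.add_right c d b h2
      rwa [add_comm c b, add_comm d b] at h3

end MonOrd

section OrderDomainAux

variable {Fq R : Type*} [Field Fq] [CommRing R] [Algebra Fq R] {r n : ℕ}

lemma ne_zero_of_rho_coe (W : WeightFunction Fq R r) {g : R} {ε : Fin r → ℕ}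
    (h : W.rho g = ↑ε) : g ≠ 0 := by
  intro h0
  rw [(W.W0 g).mpr h0] at h
  exact WithBot.bot_ne_coe h

lemma rho_coe_of_ne (W : WeightFunction Fq R r) {g : R} (h : g ≠ 0) :
    ∃ ε ∈ W.Γ, W.rho g = ↑ε := by
  refine W.mem_Γ g (fun hbot => h ((W.W0 g).mp hbot))

lemma alt_lt (W : WeightFunction Fq R r) (α : Fin n → Fin r → ℕ)
    (hmono : ∀ i j : Fin n, i < j → W.mo.lt (α i) (α j))
    {k m : Fin n} (h : W.mo.lt (α k) (α m)) : (k : ℕ) < (m : ℕ) := by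
  rcases lt_trichotomy k m with h' | rfl | h'
  · exact h'
  · exact absurd h (W.mo.irrefl _)
  · exact absurd (W.mo.trans _ _ _ h (hmono m k h')) (W.mo.irrefl _)

/-- Key structural lemma: the image of an element of weight `ε` lies in the span of
the basis vectors whose jump weights are `⪯ ε`. -/
lemma lemF (W : WeightFunction Fq R r) (φ : R → Fin n → Fq)
    (hφlin : IsLinearMap Fq φ)
    (α : Fin n → Fin r → ℕ)
    (hcompl : ∀ η : Fin r → ℕ, IsJump W φ η → ∃ i : Fin n, α i = η)
    (f : Fin n → R) (hf : ∀ i : Fin n, W.rho (f i) = ↑(α i))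
    (b : Fin n → Fin n → Fq) (hb : ∀ i : Fin n, b i = φ (f i))
    (ε : Fin r → ℕ) :
    ∀ h : R, W.rho h = ↑ε →
      φ h ∈ Submodule.span Fq (b '' {k | W.mo.wle ↑(α k) ↑ε}) := by
  refine (MonOrd.lt_wf W.mo).induction
    (C := fun ε => ∀ h : R, W.rho h = ↑ε →
      φ h ∈ Submodule.span Fq (b '' {k | W.mo.wle ↑(α k) ↑ε})) ε ?_
  intro ε IH h hρ
  have hh0 : h ≠ 0 := ne_zero_of_rho_coe W hρ
  have hεΓ : ε ∈ W.Γ := by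
    obtain ⟨γ, hγ, hγ2⟩ := rho_coe_of_ne W hh0
    rw [hρ, WithBot.coe_inj] at hγ2
    rw [hγ2]; exact hγ
  by_cases hj : IsJump W φ ε
  · obtain ⟨m, hm⟩ := hcompl ε hj
    have hfm : f m ≠ 0 := ne_zero_of_rho_coe W (hf m)
    obtain ⟨a, ha, hlt⟩ := W.W4 h (f m) hh0 hfm (by rw [hρ, hf m, hm])
    rw [hf m, hm] at hlt
    have hbm : φ (f m) ∈ b '' {k | W.mo.wle ↑(α k) ↑ε} :=
      ⟨m, Or.inr (by rw [hm]), (hb m)⟩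
    have hsplit : φ h = φ (h - a • f m) + a • φ (f m) := by
      rw [hφlin.map_sub, hφlin.map_smul, sub_add_cancel]
    rcases eq_or_ne (h - a • f m) 0 with h0 | h0
    · rw [hsplit, h0, hφlin.map_zero, zero_add]
      exact Submodule.smul_mem _ a (Submodule.subset_span hbm)
    · obtain ⟨ε', hε'Γ, hε'⟩ := rho_coe_of_ne W h0
      rw [hε', MonOrd.wlt_coe_iff] at hlt
      have hmem := IH ε' hlt _ hε'
      have hmono' : (b '' {k | W.mo.wle ↑(α k) ↑ε'}) ⊆ b '' {k | W.mo.wle ↑(α k) ↑ε} :=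
        Set.image_mono (fun k hk =>
          Or.inl (MonOrd.wle_wlt_trans hk (MonOrd.wlt_coe_iff.mpr hlt)))
      rw [hsplit]
      exact Submodule.add_mem _ (Submodule.span_mono hmono' hmem)
        (Submodule.smul_mem _ a (Submodule.subset_span hbm))
  · rw [IsJump] at hj
    push_neg at hj
    obtain ⟨γ', hγ'Γ, hγ'lt, hns⟩ := hj hεΓ
    have hsub : φ '' Rsub W γ' ⊆ φ '' Rsub W ε :=
      Set.image_mono (fun x hx =>
        MonOrd.wle_trans' hx (Or.inl (MonOrd.wlt_coe_iff.mpr hγ'lt)))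
    rw [Set.ssubset_iff_subset_ne] at hns
    push_neg at hns
    have heq := hns hsub
    have hmem : φ h ∈ φ '' Rsub W γ' := by
      rw [heq]; exact ⟨h, Or.inr hρ, rfl⟩
    obtain ⟨h', hh', hφh'⟩ := hmem
    have hh'2 : W.mo.wle (W.rho h') ↑γ' := hh'
    rcases eq_or_ne h' 0 with rfl | h'0
    · rw [← hφh', hφlin.map_zero]
      exact Submodule.zero_mem _
    · obtain ⟨ε'', hε''Γ, hε''⟩ := rho_coe_of_ne W h'0
      rw [hε''] at hh'2
      have hlt2 : W.mo.lt ε'' ε := MonOrd.wlt_coe_iff.mp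
        (MonOrd.wle_wlt_trans hh'2 (MonOrd.wlt_coe_iff.mpr hγ'lt))
      have hmem2 := IH ε'' hlt2 h' hε''
      rw [← hφh']
      refine Submodule.span_mono (Set.image_mono fun k hk => ?_) hmem2
      exact Or.inl (MonOrd.wle_wlt_trans hk (MonOrd.wlt_coe_iff.mpr hlt2))

lemma li_b (W : WeightFunction Fq R r) (φ : R → Fin n → Fq)
    (hφsurj : Function.Surjective φ) (hφlin : IsLinearMap Fq φ)
    (α : Fin n → Fin r → ℕ)
    (hcompl : ∀ η : Fin r → ℕ, IsJump W φ η → ∃ i : Fin n, α i = η)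
    (f : Fin n → R) (hf : ∀ i : Fin n, W.rho (f i) = ↑(α i))
    (b : Fin n → Fin n → Fq) (hb : ∀ i : Fin n, b i = φ (f i)) :
    LinearIndependent Fq b := by
  have htop : ⊤ ≤ Submodule.span Fq (Set.range b) := by
    intro v _
    obtain ⟨h, rfl⟩ := hφsurj v
    rcases eq_or_ne h 0 with rfl | h0
    · rw [hφlin.map_zero]
      exact Submodule.zero_mem _
    · obtain ⟨ε, hεΓ, hε⟩ := rho_coe_of_ne W h0
      exact Submodule.span_mono (Set.image_subset_range _ _)
        (lemF W φ hφlin α hcompl f hf b hb ε h hε)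
  have hcard : Fintype.card (Fin n) = Module.finrank Fq (Fin n → Fq) := by
    rw [Module.finrank_fin_fun, Fintype.card_fin]
  exact linearIndependent_of_top_le_span_of_card_eq_finrank htop hcard

/-- No nonzero kernel element has a jump weight. -/
lemma claimE (W : WeightFunction Fq R r) (φ : R → Fin n → Fq)
    (hφsurj : Function.Surjective φ) (hφlin : IsLinearMap Fq φ)
    (α : Fin n → Fin r → ℕ)
    (hcompl : ∀ η : Fin r → ℕ, IsJump W φ η → ∃ i : Fin n, α i = η)
    (f : Fin n → R) (hf : ∀ i : Fin n, W.rho (f i) = ↑(α i))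
    (b : Fin n → Fin n → Fq) (hb : ∀ i : Fin n, b i = φ (f i))
    (k : R) (m : Fin n) (hρk : W.rho k = ↑(α m)) (hker : φ k = 0) : False := by
  have hk0 : k ≠ 0 := ne_zero_of_rho_coe W hρk
  have hfm : f m ≠ 0 := ne_zero_of_rho_coe W (hf m)
  have hli := li_b W φ hφsurj hφlin α hcompl f hf b hb
  obtain ⟨a, ha, hlt⟩ := W.W4 (f m) k hfm hk0 (by rw [hf m, hρk])
  rw [hρk] at hlt
  have hφeq : φ (f m - a • k) = b m := by
    rw [hφlin.map_sub, hφlin.map_smul, hker, smul_zero, sub_zero, hb]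
  rcases eq_or_ne (f m - a • k) 0 with h0 | h0
  · rw [h0, hφlin.map_zero] at hφeq
    exact hli.ne_zero m hφeq.symm
  · obtain ⟨ε', hε'Γ, hε'⟩ := rho_coe_of_ne W h0
    have hmem := lemF W φ hφlin α hcompl f hf b hb ε' _ hε'
    rw [hφeq] at hmem
    rw [hε', MonOrd.wlt_coe_iff] at hlt
    have hsubset : {k' : Fin n | W.mo.wle ↑(α k') ↑ε'} ⊆ {k' : Fin n | k' ≠ m} := by
      intro k' hk' hkm
      subst hkm
      exact W.mo.irrefl _ (MonOrd.wlt_coe_iff.mp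
        (MonOrd.wle_wlt_trans hk' (MonOrd.wlt_coe_iff.mpr hlt)))
    exact hli.notMem_span_image (by simp : m ∉ {k' : Fin n | k' ≠ m})
      (Submodule.span_mono (Set.image_mono hsubset) hmem)

lemma ker_elt (W : WeightFunction Fq R r) (φ : R → Fin n → Fq)
    (hφlin : IsLinearMap Fq φ) {h g : R} {η : Fin r → ℕ} (hρh : W.rho h = ↑η)
    (hg : W.mo.wlt (W.rho g) ↑η) (hφg : φ g = φ h) :
    W.rho (h - g) = ↑η ∧ φ (h - g) = 0 := by
  have hng : W.rho (-g) = W.rho g := by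
    rcases eq_or_ne g 0 with rfl | hg0
    · rw [neg_zero]
    · rw [← neg_one_smul Fq g, W.W1 (-1) g (by simp)]
  have h2 : W.rho (-g + h) = W.rho h := W.W2b (-g) h (by rw [hng, hρh]; exact hg)
  constructor
  · rw [show h - g = -g + h by ring, h2, hρh]
  · rw [hφlin.map_sub, hφg, sub_self]

def Vsub (W : WeightFunction Fq R r) (φ : R → Fin n → Fq)
    (hφlin : IsLinearMap Fq φ) (γ : Fin r → ℕ) : Submodule Fq (Fin n → Fq) where
  carrier := φ '' Rsub W γ
  add_mem' := by
    rintro x y ⟨hx, hhx, rfl⟩ ⟨hy, hhy, rfl⟩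
    refine ⟨hx + hy, ?_, hφlin.map_add hx hy⟩
    rcases W.W2a hx hy with h | h
    · exact MonOrd.wle_trans' h hhx
    · exact MonOrd.wle_trans' h hhy
  zero_mem' := ⟨0, Or.inl (by rw [(W.W0 0).mpr rfl]; exact MonOrd.bot_wlt), hφlin.map_zero⟩
  smul_mem' := by
    rintro a x ⟨hx, hhx, rfl⟩
    rcases eq_or_ne a 0 with rfl | ha
    · refine ⟨0, Or.inl (by rw [(W.W0 0).mpr rfl]; exact MonOrd.bot_wlt), ?_⟩
      rw [hφlin.map_zero, zero_smul]
    · refine ⟨a • hx, ?_, hφlin.map_smul a hx⟩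
      show W.mo.wle (W.rho (a • hx)) _
      rw [W.W1 a hx ha]
      exact hhx

end OrderDomainAux

section OrderDomainAux2

variable {Fq R : Type*} [Field Fq] [CommRing R] [Algebra Fq R] {r n : ℕ}

lemma jump_of_sum (W : WeightFunction Fq R r) (φ : R → Fin n → Fq)
    (hφsurj : Function.Surjective φ) (hφlin : IsLinearMap Fq φ)
    (hφmul : ∀ f g : R, φ (f * g) = φ f * φ g)
    (α : Fin n → Fin r → ℕ)
    (hcompl : ∀ η : Fin r → ℕ, IsJump W φ η → ∃ i : Fin n, α i = η)
    (f : Fin n → R) (hf : ∀ i : Fin n, W.rho (f i) = ↑(α i))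
    (b : Fin n → Fin n → Fq) (hb : ∀ i : Fin n, b i = φ (f i))
    (γ δ : Fin r → ℕ) (hγ : γ ∈ W.Γ) (hδ : δ ∈ W.Γ)
    (l : Fin n) (hsum : γ + δ = α l) : IsJump W φ γ := by
  by_contra hj
  rw [IsJump] at hj
  push_neg at hj
  obtain ⟨γ', hγ'Γ, hγ'lt, hns⟩ := hj hγ
  obtain ⟨fγ, hfγ⟩ := W.surj γ hγ
  obtain ⟨fδ, hfδ⟩ := W.surj δ hδ
  have hsub : φ '' Rsub W γ' ⊆ φ '' Rsub W γ :=
    Set.image_mono (fun x hx =>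
      MonOrd.wle_trans' hx (Or.inl (MonOrd.wlt_coe_iff.mpr hγ'lt)))
  rw [Set.ssubset_iff_subset_ne] at hns
  push_neg at hns
  have heq := hns hsub
  have hmem : φ fγ ∈ φ '' Rsub W γ' := by
    rw [heq]; exact ⟨fγ, Or.inr hfγ, rfl⟩
  obtain ⟨g, hg, hφg⟩ := hmem
  have hg2 : W.mo.wle (W.rho g) ↑γ' := hg
  have hgwlt : W.mo.wlt (W.rho g) ↑γ :=
    MonOrd.wle_wlt_trans hg2 (MonOrd.wlt_coe_iff.mpr hγ'lt)
  obtain ⟨hρk, hφk⟩ := ker_elt W φ hφlin hfγ hgwlt hφg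
  have hk0 : fγ - g ≠ 0 := ne_zero_of_rho_coe W hρk
  have hfδ0 : fδ ≠ 0 := ne_zero_of_rho_coe W hfδ
  have hρprod : W.rho ((fγ - g) * fδ) = ↑(α l) := by
    rw [W.W5 _ _ hk0 hfδ0 γ δ hρk hfδ, hsum]
  have hφprod : φ ((fγ - g) * fδ) = 0 := by rw [hφmul, hφk, zero_mul]
  exact claimE W φ hφsurj hφlin α hcompl f hf b hb _ l hρprod hφprod

lemma rho_eq_of (W : WeightFunction Fq R r) (φ : R → Fin n → Fq)
    (hφsurj : Function.Surjective φ) (hφlin : IsLinearMap Fq φ)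
    (α : Fin n → Fin r → ℕ)
    (hmono : ∀ i j : Fin n, i < j → W.mo.lt (α i) (α j))
    (hcompl : ∀ η : Fin r → ℕ, IsJump W φ η → ∃ i : Fin n, α i = η)
    (f : Fin n → R) (hf : ∀ i : Fin n, W.rho (f i) = ↑(α i))
    (b : Fin n → Fin n → Fq) (hb : ∀ i : Fin n, b i = φ (f i))
    (h : R) (m : Fin n) (hρ : W.rho h = ↑(α m)) :
    rho Fq b (φ h) = (m : ℕ) + 1 := by
  have hmem : φ h ∈ Lspan Fq b ((m : ℕ) + 1) := by
    refine Submodule.span_mono (Set.image_mono ?_)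
      (lemF W φ hφlin α hcompl f hf b hb (α m) h hρ)
    intro k hk
    rcases hk with hk | hk
    · have h2 : (k : ℕ) < (m : ℕ) := alt_lt W α hmono (MonOrd.wlt_coe_iff.mp hk)
      show (k : ℕ) < (m : ℕ) + 1
      omega
    · rw [WithBot.coe_inj] at hk
      have hkm : k = m := by
        rcases lt_trichotomy k m with h' | h' | h'
        · exact absurd (hk ▸ hmono k m h') (W.mo.irrefl _)
        · exact h'
        · exact absurd (hk ▸ hmono m k h') (W.mo.irrefl _)
      show (k : ℕ) < (m : ℕ) + 1
      rw [hkm]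
      omega
  have hnot : ∀ l' : ℕ, l' ≤ (m : ℕ) → φ h ∉ Lspan Fq b l' := by
    intro l' hl' hin
    rcases Nat.eq_zero_or_pos l' with rfl | hpos
    · have hempty : (b '' {i : Fin n | (i : ℕ) < 0}) = ∅ := by
        simp
      rw [Lspan, hempty, Submodule.span_empty, Submodule.mem_bot] at hin
      exact claimE W φ hφsurj hφlin α hcompl f hf b hb h m hρ hin
    · have hm'lt : l' - 1 < n := by omega
      set m' : Fin n := ⟨l' - 1, lt_of_le_of_lt (by omega) m.isLt⟩ with hm'
      have hsubV : Lspan Fq b l' ≤ Vsub W φ hφlin (α m') := by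
        rw [Lspan]
        refine Submodule.span_le.mpr ?_
        rintro x ⟨k, hk, rfl⟩
        have hk' : (k : ℕ) < l' := hk
        refine ⟨f k, ?_, (hb k).symm⟩
        show W.mo.wle (W.rho (f k)) ↑(α m')
        rw [hf k]
        rcases eq_or_ne k m' with rfl | hne
        · exact Or.inr rfl
        · refine Or.inl (MonOrd.wlt_coe_iff.mpr (hmono k m' ?_))
          have h3 : (k : ℕ) ≠ (m' : ℕ) := fun hc => hne (Fin.ext hc)
          have h4 : (m' : ℕ) = l' - 1 := rfl
          show (k : ℕ) < (m' : ℕ)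
          omega
      obtain ⟨g, hgR, hφg⟩ := hsubV hin
      have hgR2 : W.mo.wle (W.rho g) ↑(α m') := hgR
      have hm'm : W.mo.lt (α m') (α m) := by
        refine hmono m' m ?_
        have h4 : (m' : ℕ) = l' - 1 := rfl
        show (m' : ℕ) < (m : ℕ)
        omega
      have hgwlt : W.mo.wlt (W.rho g) ↑(α m) :=
        MonOrd.wle_wlt_trans hgR2 (MonOrd.wlt_coe_iff.mpr hm'm)
      obtain ⟨hρk, hφk⟩ := ker_elt W φ hφlin hρ hgwlt hφg
      exact claimE W φ hφsurj hφlin α hcompl f hf b hb _ m hρk hφk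
  refine le_antisymm (Nat.sInf_le hmem) (le_csInf ⟨_, hmem⟩ ?_)
  intro l'' hl''
  by_contra hcon
  push_neg at hcon
  exact hnot l'' (by omega) hl''

lemma rho_le_of (W : WeightFunction Fq R r) (φ : R → Fin n → Fq)
    (hφlin : IsLinearMap Fq φ)
    (α : Fin n → Fin r → ℕ)
    (hmono : ∀ i j : Fin n, i < j → W.mo.lt (α i) (α j))
    (hcompl : ∀ η : Fin r → ℕ, IsJump W φ η → ∃ i : Fin n, α i = η)
    (f : Fin n → R) (hf : ∀ i : Fin n, W.rho (f i) = ↑(α i))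
    (b : Fin n → Fin n → Fq) (hb : ∀ i : Fin n, b i = φ (f i))
    (h : R) (l : Fin n) {η : Fin r → ℕ} (hρ : W.rho h = ↑η)
    (hlt : W.mo.lt η (α l)) : rho Fq b (φ h) ≤ (l : ℕ) := by
  have hmem : φ h ∈ Lspan Fq b (l : ℕ) := by
    refine Submodule.span_mono (Set.image_mono ?_)
      (lemF W φ hφlin α hcompl f hf b hb η h hρ)
    intro k hk
    have h2 : W.mo.lt (α k) (α l) := MonOrd.wlt_coe_iff.mp
      (MonOrd.wle_wlt_trans hk (MonOrd.wlt_coe_iff.mpr hlt))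
    exact alt_lt W α hmono h2
  exact Nat.sInf_le hmem

end OrderDomainAux2

theorem stmt14 {Fq R : Type*} [Field Fq] [CommRing R] [Algebra Fq R] {r n : ℕ}
    (W : WeightFunction Fq R r) (φ : R → Fin n → Fq)
    (hφsurj : Function.Surjective φ) (hφlin : IsLinearMap Fq φ)
    (hφmul : ∀ f g : R, φ (f * g) = φ f * φ g)
    (α : Fin n → Fin r → ℕ)
    (hα0 : ∀ h0 : 0 < n, α ⟨0, h0⟩ = 0)
    (hmono : ∀ i j : Fin n, i < j → W.mo.lt (α i) (α j))
    (hjump : ∀ i : Fin n, IsJump W φ (α i))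
    (hcompl : ∀ η : Fin r → ℕ, IsJump W φ η → ∃ i : Fin n, α i = η)
    (f : Fin n → R) (hf : ∀ i : Fin n, W.rho (f i) = ↑(α i))
    (b : Fin n → Fin n → Fq) (hb : ∀ i : Fin n, b i = φ (f i)) :
    ∀ γ ∈ W.Γ, ∀ δ ∈ W.Γ, ∀ l : Fin n, γ + δ = α l →
      ∃ i j : Fin n, α i = γ ∧ α j = δ ∧ WB Fq b b i j ∧
        rho Fq b (b i * b j) = (l : ℕ) + 1 := by
  intro γ hγ δ hδ l hsum
  have hjγ := jump_of_sum W φ hφsurj hφlin hφmul α hcompl f hf b hb γ δ hγ hδ l hsum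
  have hjδ := jump_of_sum W φ hφsurj hφlin hφmul α hcompl f hf b hb δ γ hδ hγ l
    (by rw [add_comm]; exact hsum)
  obtain ⟨i, hi⟩ := hcompl γ hjγ
  obtain ⟨j, hj⟩ := hcompl δ hjδ
  have hρij : W.rho (f i * f j) = ↑(α l) := by
    rw [W.W5 _ _ (ne_zero_of_rho_coe W (hf i)) (ne_zero_of_rho_coe W (hf j)) _ _ (hf i) (hf j),
      hi, hj, hsum]
  have hbij : b i * b j = φ (f i * f j) := by rw [hb, hb, hφmul]
  have hρval : rho Fq b (b i * b j) = (l : ℕ) + 1 := by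
    rw [hbij]
    exact rho_eq_of W φ hφsurj hφlin α hmono hcompl f hf b hb _ l hρij
  refine ⟨i, j, hi, hj, ?_, hρval⟩
  intro i' j' hi'le hj'le hne
  rw [hρval]
  have hor : i' < i ∨ j' < j := by
    by_contra hc
    push_neg at hc
    have h1 : i' = i := le_antisymm hi'le hc.1
    have h2 : j' = j := le_antisymm hj'le hc.2
    exact hne (by rw [h1, h2])
  have hlt' : W.mo.lt (α i' + α j') (α i + α j) := by
    refine MonOrd.add_lt' W.mo ?_ ?_ ?_
    · rcases hi'le.lt_or_eq with h' | h'
      · exact Or.inr (hmono _ _ h')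
      · exact Or.inl (by rw [h'])
    · rcases hj'le.lt_or_eq with h' | h'
      · exact Or.inr (hmono _ _ h')
      · exact Or.inl (by rw [h'])
    · rintro ⟨e1, e2⟩
      rcases hor with h' | h'
      · exact W.mo.irrefl _ (e1 ▸ hmono i' i h')
      · exact W.mo.irrefl _ (e2 ▸ hmono j' j h')
  have hρ' : W.rho (f i' * f j') = ↑(α i' + α j') :=
    W.W5 _ _ (ne_zero_of_rho_coe W (hf i')) (ne_zero_of_rho_coe W (hf j')) _ _ (hf i') (hf j')
  have hb' : b i' * b j' = φ (f i' * f j') := by rw [hb, hb, hφmul]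
  rw [hi, hj, hsum] at hlt'
  have hle := rho_le_of W φ hφlin α hmono hcompl f hf b hb (f i' * f j') l hρ' hlt'
  rw [hb']
  omega
end

section
/- Let G = {g_1,...,g_n} and H = {h_1,...,h_n} be bases of F_q^n satisfying the weaker condition g_i · h_{n-i+1} ≠ 0 and g_i · h_j = 0 for j < n−i+1. Then for any nonzero v in F_q^n, ρ̄_G(v) = max{k : v · h_{n-k+1} ≠ 0}, and for I = {1,...,k} one has C(G,I) = C^⊥(H, Ī) where Ī = {1,...,n−k}. -/
section Work
variable {F : Type*} [Field F] {n : ℕ}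

lemma key16 (g h : Fin n → Fin n → F)
    (hg : IsBasisFam F g)
    (hw1 : ∀ i j : Fin n, (i : ℕ) + (j : ℕ) + 1 = n → dotProduct (g i) (h j) ≠ 0)
    (hw2 : ∀ i j : Fin n, (i : ℕ) + (j : ℕ) + 1 < n → dotProduct (g i) (h j) = 0)
    (k : ℕ) (hk : k ≤ n) (v : Fin n → F) :
    v ∈ Submodule.span F (g '' {i : Fin n | (i : ℕ) < k}) ↔
      ∀ j : Fin n, (j : ℕ) < n - k → dotProduct v (h j) = 0 := by
  classical
  constructor
  · intro hv j hj
    induction hv using Submodule.span_induction with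
    | mem x hx =>
      obtain ⟨i, hi, rfl⟩ := hx
      exact hw2 i j (by simp only [Set.mem_setOf_eq] at hi; omega)
    | zero => simp
    | add x y _ _ hx hy => rw [add_dotProduct, hx, hy, add_zero]
    | smul a x _ hx => rw [smul_dotProduct, hx, smul_zero]
  · intro hv
    set B : Module.Basis (Fin n) F (Fin n → F) := Module.Basis.mk hg.1 hg.2.ge with hBdef
    have hB : ∀ i, B i = g i := fun i => Module.Basis.mk_apply hg.1 hg.2.ge i
    have hgB : g = ⇑B := by ext i t; rw [hB]
    set c : Fin n → F := fun i => B.repr v i with hc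
    have hdot : ∀ j : Fin n,
        dotProduct v (h j) = ∑ i, c i * dotProduct (g i) (h j) := by
      intro j
      conv_lhs => rw [← B.sum_repr v]
      simp only [dotProduct, Finset.sum_apply, Pi.smul_apply, smul_eq_mul,
        Finset.sum_mul, Finset.mul_sum, hB]
      rw [Finset.sum_comm]
      exact Finset.sum_congr rfl fun i _ => Finset.sum_congr rfl fun t _ => by
        rw [mul_assoc]
    have main : ∀ m : ℕ, ∀ j : Fin n, (j : ℕ) = m → (j : ℕ) < n - k →
        c ⟨n - 1 - (j : ℕ), by omega⟩ = 0 := by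
      intro m
      induction m using Nat.strong_induction_on with
      | _ m ih =>
        intro j hjm hjk
        have hjn := j.isLt
        have hdot' := hdot j
        have hz : ∀ i : Fin n, i ∈ Finset.univ →
            i ≠ ⟨n - 1 - (j : ℕ), by omega⟩ → c i * dotProduct (g i) (h j) = 0 := by
          intro i _ hi
          have hin := i.isLt
          rcases lt_trichotomy (i : ℕ) (n - 1 - (j : ℕ)) with h1 | h1 | h1
          · rw [hw2 i j (by omega), mul_zero]
          · exact absurd (Fin.ext h1) hi
          · have hci : c i = 0 := by
              have := ih (n - 1 - (i : ℕ)) (by omega) ⟨n - 1 - (i : ℕ), by omega⟩ rfl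
                (by show n - 1 - (i : ℕ) < n - k; omega)
              have he : (⟨n - 1 - ((⟨n - 1 - (i : ℕ), by omega⟩ : Fin n) : ℕ), by omega⟩ :
                  Fin n) = i := by
                apply Fin.ext
                show n - 1 - (n - 1 - (i : ℕ)) = (i : ℕ); omega
              rwa [he] at this
            rw [hci, zero_mul]
        have hsum := Finset.sum_eq_single_of_mem (f := fun i => c i * dotProduct (g i) (h j))
          (⟨n - 1 - (j : ℕ), by omega⟩ : Fin n) (Finset.mem_univ _) hz
        rw [hv j hjk, hsum] at hdot'
        exact (mul_eq_zero.1 hdot'.symm).resolve_right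
          (hw1 _ j (by show n - 1 - (j : ℕ) + (j : ℕ) + 1 = n; omega))
    rw [hgB, B.mem_span_image]
    intro i hi
    simp only [Finset.mem_coe, Finsupp.mem_support_iff] at hi
    simp only [Set.mem_setOf_eq]
    by_contra hik
    push_neg at hik
    have hin := i.isLt
    have := main (n - 1 - (i : ℕ)) ⟨n - 1 - (i : ℕ), by omega⟩ rfl
      (by show n - 1 - (i : ℕ) < n - k; omega)
    have he : (⟨n - 1 - ((⟨n - 1 - (i : ℕ), by omega⟩ : Fin n) : ℕ), by omega⟩ : Fin n) = i := by
      apply Fin.ext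
      show n - 1 - (n - 1 - (i : ℕ)) = (i : ℕ); omega
    rw [he] at this
    exact hi this

end Work


theorem stmt16 {F : Type*} [Field F] {n : ℕ} (g h : Fin n → Fin n → F)
    (hg : IsBasisFam F g) (hh : IsBasisFam F h)
    (hw1 : ∀ i j : Fin n, (i : ℕ) + (j : ℕ) + 1 = n → dotProduct (g i) (h j) ≠ 0)
    (hw2 : ∀ i j : Fin n, (i : ℕ) + (j : ℕ) + 1 < n → dotProduct (g i) (h j) = 0) :
    (∀ v : Fin n → F, v ≠ 0 →
      rho F g v =
        sSup {k : ℕ | ∃ j : Fin n, k = n - (j : ℕ) ∧ dotProduct v (h j) ≠ 0}) ∧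
    ∀ k : ℕ, k ≤ n → ∀ v : Fin n → F,
      v ∈ Submodule.span F (g '' {i : Fin n | (i : ℕ) < k}) ↔
        ∀ w ∈ Submodule.span F (h '' {l : Fin n | (l : ℕ) < n - k}),
          dotProduct v w = 0 := by
  constructor
  · intro v hv
    set S := {k : ℕ | ∃ j : Fin n, k = n - (j : ℕ) ∧ dotProduct v (h j) ≠ 0} with hS
    have hex : ∃ j : Fin n, dotProduct v (h j) ≠ 0 := by
      by_contra hc
      push_neg at hc
      have h0 : v ∈ Submodule.span F (g '' {i : Fin n | (i : ℕ) < 0}) :=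
        (key16 g h hg hw1 hw2 0 (Nat.zero_le n) v).2 (fun j _ => hc j)
      have he : (g '' {i : Fin n | (i : ℕ) < 0}) = ∅ := by simp
      rw [he, Submodule.span_empty, Submodule.mem_bot] at h0
      exact hv h0
    have hne : S.Nonempty := by
      obtain ⟨j1, hj1⟩ := hex
      exact ⟨n - (j1 : ℕ), j1, rfl, hj1⟩
    have hbdd : BddAbove S := by
      refine ⟨n, fun x hx => ?_⟩
      obtain ⟨j, hj, -⟩ := hx
      omega
    obtain ⟨j0, hsup, hj0⟩ := Nat.sSup_mem hne hbdd
    have hj0n := j0.isLt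
    have hzero : ∀ j : Fin n, (j : ℕ) < (j0 : ℕ) → dotProduct v (h j) = 0 := by
      intro j hj
      by_contra hne'
      have hmem : n - (j : ℕ) ∈ S := ⟨j, rfl, hne'⟩
      have := le_csSup hbdd hmem
      rw [hsup] at this
      have := j.isLt
      omega
    have hm : v ∈ Lspan F g (n - (j0 : ℕ)) := by
      refine (key16 g h hg hw1 hw2 (n - (j0 : ℕ)) (by omega) v).2 (fun j hj => ?_)
      exact hzero j (by omega)
    have hlb : ∀ l ∈ {l : ℕ | v ∈ Lspan F g l}, n - (j0 : ℕ) ≤ l := by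
      intro l hl
      by_contra hc
      push_neg at hc
      have := (key16 g h hg hw1 hw2 l (by omega) v).1 hl j0 (by omega)
      exact hj0 this
    rw [hsup]
    simp only [rho]
    exact le_antisymm (Nat.sInf_le hm) (le_csInf ⟨n - (j0 : ℕ), hm⟩ hlb)
  · intro k hk v
    rw [key16 g h hg hw1 hw2 k hk v]
    constructor
    · intro hv w hw
      induction hw using Submodule.span_induction with
      | mem x hx => obtain ⟨j, hj, rfl⟩ := hx; exact hv j hj
      | zero => simp
      | add x y _ _ hx hy => rw [dotProduct_add, hx, hy, add_zero]
      | smul a x _ hx => rw [dotProduct_smul, hx, smul_zero]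
    · intro hv j hj
      exact hv (h j) (Submodule.subset_span ⟨j, hj, rfl⟩)
end
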